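/- Let t be a real number with t < 0, and put z := 1/(1−t), so 0 < z < 1. Then ∫_{1/t}^{0} dx / √( x(x−1)(1−tx) ) = π · √z · ₂F₁(1/2, 1/2; 1; z). (This is the period of the holomorphic differential dx/y on the Legendre elliptic curve y² = x(1−x)(1−tx) over the cycle around the interval from x = 1/t to x = 0.) -/

import Mathlib

set_option autoImplicit false

open scoped Real

/-- Pochhammer symbol `(a)_n = a(a+1)⋯(a+n−1)` for a real number. -/
noncomputable def pochR (a : ℝ) (n : ℕ) : ℝ := ∏ k ∈ Finset.range n, (a + k)

/-- Gauss hypergeometric series `₂F₁(a,b;c;x)` (real). -/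
noncomputable def hyp2F1 (a b c x : ℝ) : ℝ :=
  ∑' n : ℕ, (pochR a n * pochR b n) / (pochR c n * (n.factorial : ℝ)) * x ^ n

open MeasureTheory intervalIntegral Set

/-- `(1/2)_n / n!`, the coefficient of the binomial series of `(1-x)^(-1/2)`. -/
noncomputable def cc (n : ℕ) : ℝ := pochR (1/2) n / (n.factorial : ℝ)

lemma pochR_succ (a : ℝ) (n : ℕ) : pochR a (n+1) = pochR a n * (a + n) :=
  Finset.prod_range_succ _ _

lemma pochR_one (n : ℕ) : pochR 1 n = (n.factorial : ℝ) := by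
  induction n with
  | zero => simp [pochR]
  | succ n ih =>
      rw [pochR_succ, ih, Nat.factorial_succ]
      push_cast; ring

lemma pochR_half_pos (n : ℕ) : 0 < pochR (1/2) n := by
  apply Finset.prod_pos; intro k _; positivity

lemma cc_pos (n : ℕ) : 0 < cc n := by
  have := pochR_half_pos n
  have : (0:ℝ) < n.factorial := by positivity
  unfold cc; positivity

lemma cc_zero : cc 0 = 1 := by simp [cc, pochR]

lemma cc_le_one (n : ℕ) : cc n ≤ 1 := by
  have h : pochR (1/2) n ≤ (n.factorial : ℝ) := by
    rw [← pochR_one]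
    apply Finset.prod_le_prod
    · intro k _; positivity
    · intro k _; norm_num
  have hf : (0:ℝ) < n.factorial := by positivity
  rw [cc, div_le_one hf]; exact h

lemma cc_rec (n : ℕ) : 2*(n+1) * cc (n+1) = (2*n+1) * cc n := by
  have hf : (0:ℝ) < n.factorial := by positivity
  unfold cc
  rw [pochR_succ, Nat.factorial_succ]
  push_cast
  field_simp
  ring

/-- Integrability of the basic arcsine density. -/
lemma sqrt_aux_bound {a b : ℝ} (ha : 0 < a) (hb : 1/2 ≤ b) :
    1 / Real.sqrt (a*b) ≤ Real.sqrt 2 * a ^ (-(1/2) : ℝ) := by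
  have hrw : a ^ (-(1/2) : ℝ) = 1 / Real.sqrt a := by
    rw [Real.rpow_neg ha.le, Real.sqrt_eq_rpow]; norm_num
  have hsb : Real.sqrt (1/2 : ℝ) ≤ Real.sqrt b := Real.sqrt_le_sqrt hb
  have h12 : Real.sqrt (1/2 : ℝ) = 1 / Real.sqrt 2 := by
    rw [show (1/2:ℝ) = 2⁻¹ by norm_num, Real.sqrt_inv, one_div]
  have hsb' : 1 / Real.sqrt 2 ≤ Real.sqrt b := h12 ▸ hsb
  have h3 : 1 / Real.sqrt b ≤ Real.sqrt 2 := by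
    have := one_div_le_one_div_of_le (by positivity) hsb'
    rwa [one_div_one_div] at this
  calc 1 / Real.sqrt (a*b) = (1 / Real.sqrt a) * (1 / Real.sqrt b) := by
        rw [Real.sqrt_mul ha.le]; ring
    _ ≤ (1 / Real.sqrt a) * Real.sqrt 2 :=
        mul_le_mul_of_nonneg_left h3 (by positivity)
    _ = Real.sqrt 2 * a ^ (-(1/2) : ℝ) := by rw [hrw]; ring

lemma integrable_base : IntervalIntegrable (fun u : ℝ => 1 / Real.sqrt (u*(1-u)))
    volume 0 1 := by
  have h1 : IntervalIntegrable (fun u : ℝ => u ^ (-(1/2) : ℝ)) volume 0 1 :=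
    intervalIntegral.intervalIntegrable_rpow' (by norm_num)
  have h2 : IntervalIntegrable (fun u : ℝ => (1-u) ^ (-(1/2) : ℝ)) volume 0 1 := by
    have := (intervalIntegral.intervalIntegrable_rpow' (r := (-(1/2) : ℝ)) (a := 0)
      (b := 1) (by norm_num)).comp_sub_left 1
    simpa using this.symm
  have hg : IntervalIntegrable
      (fun u : ℝ => Real.sqrt 2 * u ^ (-(1/2) : ℝ) + Real.sqrt 2 * (1-u) ^ (-(1/2) : ℝ))
      volume 0 1 := (h1.const_mul _).add (h2.const_mul _)
  apply hg.mono_fun'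
  · apply Measurable.aestronglyMeasurable
    fun_prop
  · rw [Filter.EventuallyLE, ae_restrict_iff' measurableSet_uIoc]
    apply Filter.Eventually.of_forall
    intro u hu
    rw [Set.uIoc_of_le (by norm_num : (0:ℝ) ≤ 1)] at hu
    obtain ⟨hu0, hu1⟩ := hu
    have hnn : ‖1 / Real.sqrt (u*(1-u))‖ = 1 / Real.sqrt (u*(1-u)) := by
      rw [Real.norm_of_nonneg]; positivity
    rw [hnn]
    rcases eq_or_lt_of_le hu1 with h1u | h1u
    · rw [h1u]; norm_num
    · rcases le_or_gt u (1/2) with hc | hc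
      · have := sqrt_aux_bound hu0 (by linarith : 1/2 ≤ 1 - u)
        have h2nn : (0:ℝ) ≤ Real.sqrt 2 * (1-u) ^ (-(1/2) : ℝ) :=
          mul_nonneg (Real.sqrt_nonneg 2) (Real.rpow_nonneg (by linarith) _)
        linarith
      · have := sqrt_aux_bound (by linarith : (0:ℝ) < 1 - u) (by linarith : 1/2 ≤ u)
        rw [mul_comm (1-u) u] at this
        have h2nn : (0:ℝ) ≤ Real.sqrt 2 * u ^ (-(1/2) : ℝ) := by positivity
        linarith

/-- Integrability of `u^m / sqrt (u(1-u))` on `[0,1]`. -/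
lemma integrable_mono (m : ℕ) :
    IntervalIntegrable (fun u : ℝ => u^m / Real.sqrt (u*(1-u))) volume 0 1 := by
  apply integrable_base.mono_fun'
  · apply Measurable.aestronglyMeasurable
    fun_prop
  · rw [Filter.EventuallyLE, ae_restrict_iff' measurableSet_uIoc]
    apply Filter.Eventually.of_forall
    intro u hu
    rw [Set.uIoc_of_le (by norm_num : (0:ℝ) ≤ 1)] at hu
    obtain ⟨hu0, hu1⟩ := hu
    have h1 : ‖u^m / Real.sqrt (u*(1-u))‖ = u^m / Real.sqrt (u*(1-u)) := by
      rw [Real.norm_of_nonneg]; positivity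
    rw [h1]
    gcongr
    first
    | exact pow_le_one₀ hu0.le hu1
    | exact pow_le_one _ hu0.le hu1

/-- The beta-type integral `∫_0^1 u^n/√(u(1-u)) du = π (1/2)_n/n!`. -/
lemma keyA_zero : ∫ u in (0:ℝ)..1, 1 / Real.sqrt (u*(1-u)) = π := by
  have hF : ContinuousOn (fun u : ℝ => Real.arcsin (2*u - 1)) (Icc 0 1) :=
    (Real.continuous_arcsin.comp (by continuity)).continuousOn
  have hderiv : ∀ x ∈ Ioo (0:ℝ) 1,
      HasDerivWithinAt (fun u : ℝ => Real.arcsin (2*u - 1))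
        (1 / Real.sqrt (x*(1-x))) (Ioi x) x := by
    intro x hx
    obtain ⟨hx0, hx1⟩ := hx
    have h1 : (2*x - 1 : ℝ) ≠ -1 := by intro h; nlinarith [h]
    have h2 : (2*x - 1 : ℝ) ≠ 1 := by intro h; nlinarith [h]
    have ha : HasDerivAt Real.arcsin (1 / Real.sqrt (1 - (2*x-1)^2)) (2*x - 1) :=
      Real.hasDerivAt_arcsin h1 h2
    have hlin : HasDerivAt (fun u : ℝ => 2*u - 1) 2 x := by
      simpa using ((hasDerivAt_id x).const_mul 2).sub_const 1
    have hc := ha.comp x hlin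
    have key : 1 / Real.sqrt (1 - (2*x-1)^2) * 2 = 1 / Real.sqrt (x*(1-x)) := by
      have h4 : 1 - (2*x-1)^2 = 4 * (x*(1-x)) := by ring
      rw [h4, Real.sqrt_mul (by norm_num : (0:ℝ) ≤ 4),
        show Real.sqrt 4 = 2 by
          rw [show (4:ℝ) = 2^2 by norm_num, Real.sqrt_sq (by norm_num : (0:ℝ) ≤ 2)]]
      have hs : 0 < Real.sqrt (x*(1-x)) := Real.sqrt_pos.2 (by nlinarith)
      have hsx : Real.sqrt x ≠ 0 := ne_of_gt (Real.sqrt_pos.2 hx0)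
      have hs1x : Real.sqrt (1-x) ≠ 0 := ne_of_gt (Real.sqrt_pos.2 (by linarith))
      field_simp
    rw [key] at hc
    exact hc.hasDerivWithinAt
  have := intervalIntegral.integral_eq_sub_of_hasDeriv_right_of_le (by norm_num)
    hF hderiv integrable_base
  rw [this]
  norm_num [Real.arcsin_one, Real.arcsin_neg_one]

/-- The beta-type integral `∫_0^1 u^n/√(u(1-u)) du = π (1/2)_n/n!`. -/
lemma keyA (n : ℕ) : ∫ u in (0:ℝ)..1, u^n / Real.sqrt (u*(1-u)) = π * cc n := by
  induction n with
  | zero =>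
      simp only [pow_zero, cc_zero, mul_one]
      exact keyA_zero
  | succ n ih =>
      -- FTC for G u = sqrt (u^(2n+1) * (1-u)) gives the recurrence
      set G : ℝ → ℝ := fun u => Real.sqrt (u^(2*n+1) * (1-u)) with hG
      have hcont : ContinuousOn G (Icc 0 1) :=
        (Real.continuous_sqrt.comp (by continuity)).continuousOn
      set D : ℝ → ℝ := fun u =>
        ((2*n+1 : ℝ)/2) * (u^n / Real.sqrt (u*(1-u)))
          - ((n:ℝ)+1) * (u^(n+1) / Real.sqrt (u*(1-u))) with hD
      have hDint : IntervalIntegrable D volume 0 1 :=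
        ((integrable_mono n).const_mul _).sub ((integrable_mono (n+1)).const_mul _)
      have hderiv : ∀ x ∈ Ioo (0:ℝ) 1, HasDerivWithinAt G (D x) (Ioi x) x := by
        intro x hx
        obtain ⟨hx0, hx1⟩ := hx
        have hxpos : (0:ℝ) < x^(2*n+1) * (1-x) := by
          have := pow_pos hx0 (2*n+1); nlinarith
        have hg : HasDerivAt (fun u : ℝ => u^(2*n+1) * (1-u))
            (((2*n+1 : ℕ) : ℝ) * x^(2*n) * (1-x) - x^(2*n+1)) x := by
          have h1 : HasDerivAt (fun u : ℝ => u^(2*n+1))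
              (((2*n+1 : ℕ) : ℝ) * x^(2*n)) x := by
            simpa using hasDerivAt_pow (2*n+1) x
          have h2 : HasDerivAt (fun u : ℝ => 1 - u) (-1) x := by
            simpa using (hasDerivAt_id x).const_sub 1
          have := h1.fun_mul h2
          exact this.congr_deriv (by ring)
        have hsq : HasDerivAt G
            ((((2*n+1 : ℕ) : ℝ) * x^(2*n) * (1-x) - x^(2*n+1))
              / (2 * Real.sqrt (x^(2*n+1) * (1-x)))) x := by
          have := (Real.hasDerivAt_sqrt (ne_of_gt hxpos)).comp x hg
          exact this.congr_deriv (by ring)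
        have hrw : (((2*n+1 : ℕ) : ℝ) * x^(2*n) * (1-x) - x^(2*n+1))
              / (2 * Real.sqrt (x^(2*n+1) * (1-x))) = D x := by
          have hS : (0:ℝ) < Real.sqrt (x*(1-x)) := Real.sqrt_pos.2 (by nlinarith)
          have hsplit : Real.sqrt (x^(2*n+1) * (1-x)) = x^n * Real.sqrt (x*(1-x)) := by
            have : x^(2*n+1) * (1-x) = (x^n)^2 * (x*(1-x)) := by ring
            rw [this, Real.sqrt_mul (sq_nonneg _), Real.sqrt_sq (by positivity)]
          have hxn : (0:ℝ) < x^n := by positivity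
          have hnum : (((2*n+1 : ℕ) : ℝ) * x^(2*n) * (1-x) - x^(2*n+1))
              = x^n * (x^n * ((2*(n:ℝ)+1) * (1-x) - x)) := by
            push_cast; ring
          have hden : (2 : ℝ) * (x^n * Real.sqrt (x*(1-x)))
              = x^n * (2 * Real.sqrt (x*(1-x))) := by ring
          rw [hsplit, hnum, hden, mul_div_mul_left _ _ (ne_of_gt hxn), hD]
          push_cast
          field_simp
          ring
        rw [hrw] at hsq
        exact hsq.hasDerivWithinAt
      have hFTC := intervalIntegral.integral_eq_sub_of_hasDeriv_right_of_le
        (by norm_num : (0:ℝ) ≤ 1) hcont hderiv hDint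
      have hG1 : G 1 = 0 := by simp [hG]
      have hG0 : G 0 = 0 := by simp [hG]
      rw [hG1, hG0, sub_zero] at hFTC
      have hsplit : ∫ u in (0:ℝ)..1, D u
          = ((2*n+1 : ℝ)/2) * (∫ u in (0:ℝ)..1, u^n / Real.sqrt (u*(1-u)))
            - ((n:ℝ)+1) * (∫ u in (0:ℝ)..1, u^(n+1) / Real.sqrt (u*(1-u))) := by
        rw [hD]
        rw [intervalIntegral.integral_sub ((integrable_mono n).const_mul _)
          ((integrable_mono (n+1)).const_mul _),
          intervalIntegral.integral_const_mul, intervalIntegral.integral_const_mul]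
      rw [hsplit, ih] at hFTC
      have hrec := cc_rec n
      have hn1 : ((n:ℝ)+1) ≠ 0 := by positivity
      have : ((n:ℝ)+1) * (∫ u in (0:ℝ)..1, u^(n+1) / Real.sqrt (u*(1-u)))
          = ((n:ℝ)+1) * (π * cc (n+1)) := by
        push_cast at hrec hFTC ⊢
        linear_combination (-1 : ℝ) * hFTC - (π/2) * hrec
      exact mul_left_cancel₀ hn1 this

/-- Binomial series for `(1-w)^(-1/2)`. -/
lemma summable_cc {y : ℝ} (hy : |y| < 1) : Summable (fun n : ℕ => cc n * y^n) := by
  apply Summable.of_norm_bounded (summable_geometric_of_lt_one (abs_nonneg y) hy)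
  intro n
  rw [Real.norm_eq_abs, abs_mul, abs_of_pos (cc_pos n), abs_pow]
  calc cc n * |y|^n ≤ 1 * |y|^n :=
        mul_le_mul_of_nonneg_right (cc_le_one n) (by positivity)
    _ = |y|^n := one_mul _

lemma keyB {w : ℝ} (h0 : 0 ≤ w) (h1 : w < 1) :
    HasSum (fun n => cc n * w^n) (1 / Real.sqrt (1-w)) := by
  set r : ℝ := (1+w)/2 with hrdef
  have hw_r : w < r := by rw [hrdef]; linarith
  have hr0 : 0 < r := by rw [hrdef]; linarith
  have hr1 : r < 1 := by rw [hrdef]; linarith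
  have hrnorm : ‖r‖ < 1 := by rwa [Real.norm_eq_abs, abs_of_pos hr0]
  have hu2 : Summable (fun n : ℕ => (n:ℝ) * r^n) := by
    simpa using summable_pow_mul_geometric_of_norm_lt_one 1 hrnorm
  have hu : Summable (fun n : ℕ => (n:ℝ) * r^(n-1)) := by
    apply (hu2.mul_left (1/r)).congr
    intro n
    cases n with
    | zero => simp
    | succ m =>
        have hrne : r ≠ 0 := ne_of_gt hr0
        simp only [Nat.add_sub_cancel, pow_succ]
        field_simp
  have hbound : ∀ (n : ℕ) (y : ℝ), y ∈ Ioo (-r) r →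
      ‖cc n * ((n:ℝ) * y^(n-1))‖ ≤ (n:ℝ) * r^(n-1) := by
    intro n y hy
    have hyr : |y| ≤ r := le_of_lt (abs_lt.2 ⟨hy.1, hy.2⟩)
    have h2 : |y|^(n-1) ≤ r^(n-1) := pow_le_pow_left₀ (abs_nonneg y) hyr _
    have h3 : ‖cc n * ((n:ℝ) * y^(n-1))‖ = cc n * ((n:ℝ) * |y|^(n-1)) := by
      rw [Real.norm_eq_abs, abs_mul, abs_mul, abs_pow, abs_of_pos (cc_pos n),
        Nat.abs_cast]
    rw [h3]
    calc cc n * ((n:ℝ) * |y|^(n-1)) ≤ 1 * ((n:ℝ) * |y|^(n-1)) :=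
          mul_le_mul_of_nonneg_right (cc_le_one n) (by positivity)
      _ = (n:ℝ) * |y|^(n-1) := one_mul _
      _ ≤ (n:ℝ) * r^(n-1) := mul_le_mul_of_nonneg_left h2 (Nat.cast_nonneg n)
  have hg : ∀ (n : ℕ) (y : ℝ), y ∈ Ioo (-r) r →
      HasDerivAt (fun x : ℝ => cc n * x^n) (cc n * ((n:ℝ) * y^(n-1))) y :=
    fun n y _ => (hasDerivAt_pow n y).const_mul (cc n)
  have h00 : (0:ℝ) ∈ Ioo (-r) r := ⟨by linarith, hr0⟩
  have hsum0 : Summable (fun n : ℕ => cc n * (0:ℝ)^n) :=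
    summable_cc (by rw [abs_zero]; norm_num)
  set F : ℝ → ℝ := fun x => ∑' n : ℕ, cc n * x^n with hF
  have HF : ∀ y ∈ Ioo (-r) r,
      HasDerivAt F (∑' n : ℕ, cc n * ((n:ℝ) * y^(n-1))) y := fun y hy =>
    hasDerivAt_tsum_of_isPreconnected hu isOpen_Ioo (convex_Ioo _ _).isPreconnected
      hg hbound h00 hsum0 hy
  have hODE : ∀ y ∈ Ioo (-r) r,
      2 * (1-y) * (∑' n : ℕ, cc n * ((n:ℝ) * y^(n-1))) = F y := by
    intro y hy
    have hyr : |y| < r := abs_lt.2 ⟨hy.1, hy.2⟩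
    have hyn : |y| < 1 := lt_trans hyr hr1
    have hs0 : Summable (fun n : ℕ => cc n * y^n) := summable_cc hyn
    have hsD : Summable (fun n : ℕ => cc n * ((n:ℝ) * y^(n-1))) :=
      Summable.of_norm_bounded hu (fun n => hbound n y hy)
    have hs1 : Summable (fun n : ℕ => (n:ℝ) * (cc n * y^n)) := by
      apply Summable.of_norm_bounded hu2
      intro n
      rw [Real.norm_eq_abs, abs_mul, abs_mul, abs_of_pos (cc_pos n), abs_pow,
        Nat.abs_cast]
      calc (n:ℝ) * (cc n * |y|^n) ≤ (n:ℝ) * (1 * |y|^n) := by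
            apply mul_le_mul_of_nonneg_left ?_ (Nat.cast_nonneg n)
            exact mul_le_mul_of_nonneg_right (cc_le_one n) (by positivity)
        _ = (n:ℝ) * |y|^n := by ring
        _ ≤ (n:ℝ) * r^n := by
            apply mul_le_mul_of_nonneg_left ?_ (Nat.cast_nonneg n)
            exact pow_le_pow_left₀ (abs_nonneg y) hyr.le _
    have step1 : (∑' n : ℕ, cc n * ((n:ℝ) * y^(n-1)))
        = ∑' n : ℕ, cc (n+1) * (((n:ℝ)+1) * y^n) := by
      rw [Summable.tsum_eq_zero_add hsD]
      push_cast
      simp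
    have step2 : ∀ n : ℕ, cc (n+1) * (((n:ℝ)+1) * y^n)
        = (n:ℝ) * (cc n * y^n) + (1/2) * (cc n * y^n) := by
      intro n
      linear_combination (y^n/2) * cc_rec n
    have step3 : (∑' n : ℕ, cc n * ((n:ℝ) * y^(n-1)))
        = (∑' n : ℕ, (n:ℝ) * (cc n * y^n)) + (1/2) * ∑' n : ℕ, cc n * y^n := by
      rw [step1, tsum_congr step2, Summable.tsum_add hs1 (hs0.mul_left (1/2)),
        tsum_mul_left]
    have step4 : y * (∑' n : ℕ, cc n * ((n:ℝ) * y^(n-1)))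
        = ∑' n : ℕ, (n:ℝ) * (cc n * y^n) := by
      rw [← tsum_mul_left]
      apply tsum_congr
      intro n
      cases n with
      | zero => simp
      | succ m => rw [Nat.add_sub_cancel, pow_succ]; push_cast; ring
    have hFy : F y = ∑' n : ℕ, cc n * y^n := rfl
    rw [hFy]
    linear_combination 2 * step3 - 2 * step4
  set H : ℝ → ℝ := fun y => (F y)^2 * (1-y) with hH
  have hHderiv : ∀ y ∈ Ioo (-r) r, HasDerivAt H 0 y := by
    intro y hy
    have h1 := HF y hy
    have ha : HasDerivAt (fun x => (F x)^2)
        (2 * F y * (∑' n : ℕ, cc n * ((n:ℝ) * y^(n-1)))) y := by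
      simpa using h1.fun_pow 2
    have hb : HasDerivAt (fun x : ℝ => 1 - x) (-1) y := by
      simpa using (hasDerivAt_id y).const_sub 1
    have h2 := ha.fun_mul hb
    refine h2.congr_deriv (Eq.symm ?_)
    have hode := hODE y hy
    linear_combination (-(F y)) * hode
  have hcont : ContinuousOn H (Icc 0 w) := by
    intro x hx
    have hx' : x ∈ Ioo (-r) r := ⟨by linarith [hx.1], lt_of_le_of_lt hx.2 hw_r⟩
    exact ((hHderiv x hx').differentiableAt.continuousAt).continuousWithinAt
  have hconst := constant_of_has_deriv_right_zero hcont (fun x hx =>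
    ((hHderiv x ⟨by linarith [hx.1], lt_trans hx.2 hw_r⟩).hasDerivWithinAt))
  have hHw : H w = H 0 := hconst w (Set.right_mem_Icc.2 h0)
  have hF0 : F 0 = 1 := by
    show (∑' n : ℕ, cc n * (0:ℝ)^n) = 1
    rw [tsum_eq_single 0 (fun n hn => by simp [zero_pow hn])]
    simp [cc_zero]
  have hH0 : H 0 = 1 := by rw [hH]; simp [hF0]
  have hsw : Summable (fun n : ℕ => cc n * w^n) :=
    summable_cc (by rwa [abs_of_nonneg h0])
  have hFw1 : 1 ≤ F w := by
    have h := Summable.le_tsum hsw 0 (fun j _ => mul_nonneg (cc_pos j).le (pow_nonneg h0 j))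
    rw [cc_zero, pow_zero, mul_one] at h
    exact h
  have hFwpos : 0 < F w := lt_of_lt_of_le one_pos hFw1
  have hsq : (F w)^2 * (1-w) = 1 := hHw.trans hH0
  have h1w : 0 < 1 - w := by linarith
  have hfinal : F w = 1 / Real.sqrt (1-w) := by
    have h2 : (F w)^2 = 1/(1-w) := by
      field_simp
      linarith [hsq]
    calc F w = Real.sqrt ((F w)^2) := (Real.sqrt_sq hFwpos.le).symm
      _ = Real.sqrt (1/(1-w)) := by rw [h2]
      _ = 1 / Real.sqrt (1-w) := by
          rw [one_div, one_div, Real.sqrt_inv]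
  rw [← hfinal]
  exact hsw.hasSum

/-- Euler-type integral representation. -/
lemma keyD {z : ℝ} (h0 : 0 < z) (h1 : z < 1) :
    ∫ u in (0:ℝ)..1, 1 / Real.sqrt (u*(1-u)*(1-z*u))
      = π * hyp2F1 (1/2) (1/2) 1 z := by
  set f : ℕ → ℝ → ℝ := fun n u => (cc n * z^n) * (u^n / Real.sqrt (u*(1-u))) with hf
  have hfint : ∀ n, Integrable (f n) (volume.restrict (Ioc (0:ℝ) 1)) := by
    intro n
    have h := (integrable_mono n).const_mul (cc n * z^n)
    rw [intervalIntegrable_iff, uIoc_of_le (by norm_num : (0:ℝ) ≤ 1)] at h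
    exact h
  have hnormval : ∀ n, (∫ u in Ioc (0:ℝ) 1, ‖f n u‖) = (cc n * z^n) * (π * cc n) := by
    intro n
    have h1 : ∀ u ∈ Ioc (0:ℝ) 1, ‖f n u‖ = f n u := by
      intro u hu
      rw [Real.norm_of_nonneg]
      exact mul_nonneg (mul_nonneg (cc_pos n).le (pow_nonneg h0.le n))
        (div_nonneg (pow_nonneg hu.1.le n) (Real.sqrt_nonneg _))
    rw [setIntegral_congr_fun measurableSet_Ioc h1]
    have h3 : (∫ u in Ioc (0:ℝ) 1, f n u) = ∫ u in (0:ℝ)..1, f n u := by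
      rw [intervalIntegral.integral_of_le (by norm_num : (0:ℝ) ≤ 1)]
    rw [h3, hf]
    simp only
    rw [intervalIntegral.integral_const_mul, keyA n]
  have hF_sum : Summable (fun n => ∫ u in Ioc (0:ℝ) 1, ‖f n u‖) := by
    apply Summable.of_nonneg_of_le
      (fun n => by
        rw [hnormval n]
        exact mul_nonneg (mul_nonneg (cc_pos n).le (pow_nonneg h0.le n))
          (mul_nonneg Real.pi_pos.le (cc_pos n).le))
      (fun n => ?_) ((summable_geometric_of_lt_one h0.le h1).mul_left π)
    rw [hnormval n]
    have hc1 := cc_le_one n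
    have hc0 := (cc_pos n).le
    have hzn : (0:ℝ) ≤ z^n := by positivity
    calc (cc n * z^n) * (π * cc n) = π * (cc n * cc n) * z^n := by ring
      _ ≤ π * (1 * 1) * z^n := by
          apply mul_le_mul_of_nonneg_right ?_ hzn
          apply mul_le_mul_of_nonneg_left ?_ Real.pi_pos.le
          exact mul_le_mul hc1 hc1 hc0 (by norm_num)
      _ = π * z^n := by ring
  have hswap := MeasureTheory.integral_tsum_of_summable_integral_norm hfint hF_sum
  have hpt : ∀ u ∈ Ioc (0:ℝ) 1, (∑' n, f n u) = 1 / Real.sqrt (u*(1-u)*(1-z*u)) := by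
    intro u hu
    obtain ⟨hu0, hu1⟩ := hu
    rcases eq_or_lt_of_le hu1 with h1u | h1u
    · have hz0 : ∀ n, f n u = 0 := by
        intro n
        rw [hf, ← h1u]
        norm_num
      rw [tsum_congr hz0, tsum_zero, ← h1u]
      norm_num
    · have hA : (0:ℝ) < Real.sqrt (u*(1-u)) := Real.sqrt_pos.2 (by nlinarith)
      have hzu0 : (0:ℝ) ≤ z*u := by positivity
      have hzu1 : z*u < 1 := by nlinarith
      have hsum := (keyB hzu0 hzu1).mul_right (1 / Real.sqrt (u*(1-u)))
      have heq : (fun n => cc n * (z*u)^n * (1 / Real.sqrt (u*(1-u)))) = fun n => f n u := by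
        funext n
        rw [hf, mul_pow]
        ring
      rw [heq] at hsum
      rw [hsum.tsum_eq]
      rw [Real.sqrt_mul (by nlinarith : (0:ℝ) ≤ u*(1-u))]
      rw [one_div, one_div, one_div, mul_inv]
      ring
  have hL : (∫ u in (0:ℝ)..1, 1 / Real.sqrt (u*(1-u)*(1-z*u)))
      = ∑' n, ∫ u in Ioc (0:ℝ) 1, f n u := by
    rw [intervalIntegral.integral_of_le (by norm_num : (0:ℝ) ≤ 1)]
    rw [← setIntegral_congr_fun measurableSet_Ioc hpt]
    exact hswap.symm
  rw [hL]
  have hval : ∀ n, (∫ u in Ioc (0:ℝ) 1, f n u) = (cc n * z^n) * (π * cc n) := by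
    intro n
    rw [intervalIntegral.integral_of_le (by norm_num : (0:ℝ) ≤ 1)] at *
    rw [show (∫ u in Ioc (0:ℝ) 1, f n u) = ∫ u in (0:ℝ)..1, f n u from
      (intervalIntegral.integral_of_le (by norm_num : (0:ℝ) ≤ 1)).symm]
    rw [hf]
    simp only
    rw [intervalIntegral.integral_const_mul, keyA n]
  have hterm : ∀ n : ℕ, (cc n * z^n) * (π * cc n)
      = π * ((pochR (1/2) n * pochR (1/2) n) / (pochR 1 n * (n.factorial:ℝ)) * z^n) := by
    intro n
    have hfac : (0:ℝ) < (n.factorial : ℝ) := by positivity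
    rw [pochR_one, cc]
    field_simp
  rw [tsum_congr hval, tsum_congr hterm, tsum_mul_left, hyp2F1]

theorem stmt11 (t : ℝ) (ht : t < 0) (z : ℝ) (hz : z = 1 / (1 - t)) :
    ∫ x in (1/t)..(0:ℝ), 1 / Real.sqrt (x * (x - 1) * (1 - t * x))
      = π * Real.sqrt z * hyp2F1 (1/2) (1/2) 1 z := by
  have htne : t ≠ 0 := ne_of_lt ht
  have h1t : (0:ℝ) < 1 - t := by linarith
  have hz0 : 0 < z := by rw [hz]; positivity
  have hz1 : z < 1 := by rw [hz, div_lt_one h1t]; linarith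
  have hzt : z * (1 - t) = 1 := by rw [hz]; field_simp
  -- step 1: substitution u = t * x
  set g : ℝ → ℝ := fun u => 1 / Real.sqrt ((u/t)*((u/t)-1)*(1-u)) with hg
  have hcomp : ∀ x : ℝ, 1 / Real.sqrt (x * (x - 1) * (1 - t * x)) = g (t*x) := by
    intro x
    rw [hg]
    simp only
    rw [mul_div_cancel_left₀ x htne]
  have step1 : (∫ x in (1/t)..(0:ℝ), 1 / Real.sqrt (x * (x - 1) * (1 - t * x)))
      = t⁻¹ * ∫ u in (1:ℝ)..0, g u := by
    simp_rw [hcomp]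
    rw [intervalIntegral.integral_comp_mul_left g htne]
    rw [mul_one_div_cancel htne, mul_zero, smul_eq_mul]
  -- step 2: rewrite g on [0,1]
  have step2 : (∫ u in (0:ℝ)..1, g u)
      = (-t) * ∫ u in (0:ℝ)..1, 1 / Real.sqrt (u*(1-u)*(u-t)) := by
    rw [← intervalIntegral.integral_const_mul]
    apply intervalIntegral.integral_congr
    intro u hu
    rw [Set.uIcc_of_le (by norm_num : (0:ℝ) ≤ 1)] at hu
    obtain ⟨hu0, hu1⟩ := hu
    have hA : (0:ℝ) ≤ u*(1-u)*(u-t) := by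
      apply mul_nonneg (mul_nonneg hu0 (by linarith))
      linarith
    have harg : (u/t)*((u/t)-1)*(1-u) = (u*(1-u)*(u-t)) * (-(1/t))^2 := by
      field_simp
    have hnt : (0:ℝ) ≤ -(1/t) := by
      have : 1/t < 0 := one_div_neg.2 ht
      linarith
    rw [hg]
    simp only
    rw [harg, Real.sqrt_mul hA, Real.sqrt_sq hnt]
    have hinv : (-(1/t))⁻¹ = -t := by field_simp
    rw [one_div, mul_inv, hinv, one_div]
    ring
  -- step 3: rewrite u - t in terms of z
  have step3 : (∫ u in (0:ℝ)..1, 1 / Real.sqrt (u*(1-u)*(u-t)))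
      = Real.sqrt z * ∫ u in (0:ℝ)..1, 1 / Real.sqrt (u*(1-u)*(1-z*(1-u))) := by
    rw [← intervalIntegral.integral_const_mul]
    apply intervalIntegral.integral_congr
    intro u hu
    rw [Set.uIcc_of_le (by norm_num : (0:ℝ) ≤ 1)] at hu
    obtain ⟨hu0, hu1⟩ := hu
    have hB : (0:ℝ) ≤ u*(1-u)*(1-z*(1-u)) := by
      apply mul_nonneg (mul_nonneg hu0 (by linarith))
      nlinarith
    have harg2 : u*(1-u)*(u-t) = (u*(1-u)*(1-z*(1-u))) / z := by
      rw [eq_div_iff (ne_of_gt hz0)]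
      linear_combination (u*(1-u)) * hzt
    simp only
    rw [harg2, Real.sqrt_div hB z, Real.sqrt_eq_rpow]
    rw [one_div_div]
    rw [← Real.sqrt_eq_rpow]
    rw [div_eq_mul_one_div]
  -- step 4: reflection u ↦ 1-u
  have step4 : (∫ u in (0:ℝ)..1, 1 / Real.sqrt (u*(1-u)*(1-z*(1-u))))
      = ∫ u in (0:ℝ)..1, 1 / Real.sqrt (u*(1-u)*(1-z*u)) := by
    have hrefl : (∫ u in (0:ℝ)..1, 1 / Real.sqrt (u*(1-u)*(1-z*u)))
        = ∫ u in (0:ℝ)..1,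
            (fun v => 1 / Real.sqrt (v*(1-v)*(1-z*v))) (1 - u) := by
      rw [intervalIntegral.integral_comp_sub_left
        (fun v => 1 / Real.sqrt (v*(1-v)*(1-z*v))) 1]
      norm_num
    rw [hrefl]
    apply intervalIntegral.integral_congr
    intro u _
    simp only
    rw [show (1-u)*(1-(1-u))*(1-z*(1-u)) = u*(1-u)*(1-z*(1-u)) from by ring]
  -- assemble
  rw [step1, intervalIntegral.integral_symm, step2, step3, step4, keyD hz0 hz1]
  field_simp
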